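/- Let 0 = τ₀ < τ₁ < … < τ_T < τ_{T+1} = 1 be ordered quantile levels and set ε = max_{t=1,…,T+1} (τ_t − τ_{t−1}). Suppose F and G are distribution functions on [0,1] and there exist points y₁ ≤ … ≤ y_T in [0,1] such that F(y_t) = G(y_t) = τ_t for every t = 1, …, T. Then d_L(F, G) ≤ ε. -/

import Mathlib

open MeasureTheory Filter Set

/-- A distribution function on `[0,1]`: nondecreasing, right-continuous, with values in `[0,1]`,
equal to `0` below `0` and equal to `1` from `1` on. -/
def IsDistFunOn01 (F : ℝ → ℝ) : Prop :=
  Monotone F ∧ (∀ y : ℝ, ContinuousWithinAt F (Set.Ici y) y) ∧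
    (∀ y : ℝ, F y ∈ Set.Icc (0 : ℝ) 1) ∧ (∀ y : ℝ, y < 0 → F y = 0) ∧
    (∀ y : ℝ, 1 ≤ y → F y = 1)

/-- The Lévy distance between two (distribution) functions:
`d_L(F,G) = inf {ε > 0 : F(y − ε) − ε ≤ G(y) ≤ F(y + ε) + ε for all y}`. -/
noncomputable def levyDist (F G : ℝ → ℝ) : ℝ :=
  sInf {ε : ℝ | 0 < ε ∧ ∀ y : ℝ, F (y - ε) - ε ≤ G y ∧ G y ≤ F (y + ε) + ε}

lemma key_shared_quantiles
    (T : ℕ) (τ : ℕ → ℝ) (hτ0 : τ 0 = 0) (hτlast : τ (T + 1) = 1)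
    (ε : ℝ) (hgap : ∀ t, t ≤ T → τ (t + 1) - τ t ≤ ε)
    (F G : ℝ → ℝ) (hFmono : Monotone F) (hF0 : ∀ z, 0 ≤ F z)
    (hGmono : Monotone G) (hG1 : ∀ z, G z ≤ 1)
    (y : ℕ → ℝ)
    (hFy : ∀ t, 1 ≤ t → t ≤ T → F (y t) = τ t)
    (hGy : ∀ t, 1 ≤ t → t ≤ T → G (y t) = τ t) :
    ∀ z : ℝ, G z ≤ F z + ε := by
  intro z
  classical
  set S : Finset ℕ := (Finset.Icc 1 T).filter (fun t => y t ≤ z) with hS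
  rcases S.eq_empty_or_nonempty with hSe | hSne
  · -- no quantile point is ≤ z
    have hGz : G z ≤ τ 1 := by
      rcases Nat.eq_zero_or_pos T with hT | hT
      · have : τ 1 = 1 := by rw [← hτlast, hT]
        rw [this]; exact hG1 z
      · have h1 : ¬ y 1 ≤ z := by
          intro h
          have : (1 : ℕ) ∈ S := by
            simp [hS, Finset.mem_filter, Finset.mem_Icc, h]; omega
          simp [hSe] at this
        have : z ≤ y 1 := le_of_lt (lt_of_not_ge h1)
        calc G z ≤ G (y 1) := hGmono this
          _ = τ 1 := hGy 1 le_rfl hT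
    have : τ 1 ≤ ε := by
      have := hgap 0 (Nat.zero_le T)
      simpa [hτ0] using this
    have hε0 : G z ≤ ε := le_trans hGz this
    linarith [hF0 z]
  · set t := S.max' hSne with ht
    have htmem : t ∈ S := S.max'_mem hSne
    have htIcc : 1 ≤ t ∧ t ≤ T := by
      have := Finset.mem_filter.mp htmem
      exact Finset.mem_Icc.mp this.1
    have hyt : y t ≤ z := (Finset.mem_filter.mp htmem).2
    have hFz : τ t ≤ F z := by
      rw [← hFy t htIcc.1 htIcc.2]; exact hFmono hyt
    have hGz : G z ≤ τ (t + 1) := by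
      rcases eq_or_lt_of_le htIcc.2 with heq | hlt
      · rw [heq, hτlast]; exact hG1 z
      · have h1 : ¬ y (t + 1) ≤ z := by
          intro h
          have hmem : (t + 1) ∈ S := by
            simp only [hS, Finset.mem_filter, Finset.mem_Icc]
            exact ⟨⟨by omega, by omega⟩, h⟩
          have := S.le_max' _ hmem
          omega
        have : z ≤ y (t + 1) := le_of_lt (lt_of_not_ge h1)
        calc G z ≤ G (y (t + 1)) := hGmono this
          _ = τ (t + 1) := hGy (t + 1) (by omega) (by omega)
    have := hgap t htIcc.2
    linarith

/-- If two distribution functions on `[0,1]` agree at points realizing a common grid of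
quantile levels `0 = τ₀ < τ₁ < ⋯ < τ_T < τ_{T+1} = 1`, then their Lévy distance is at most
the largest gap `ε = max_{t=1,…,T+1} (τ_t − τ_{t−1})`. -/
theorem levyDist_le_of_shared_quantiles
    (T : ℕ) (τ : ℕ → ℝ)
    (hτ0 : τ 0 = 0) (hτlast : τ (T + 1) = 1)
    (hτmono : ∀ t, t ≤ T → τ t < τ (t + 1))
    (ε : ℝ)
    (hε : ε = (Finset.Icc 1 (T + 1)).sup'
      (Finset.nonempty_Icc.mpr (by omega)) (fun t => τ t - τ (t - 1)))
    (F G : ℝ → ℝ) (hF : IsDistFunOn01 F) (hG : IsDistFunOn01 G)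
    (y : ℕ → ℝ)
    (hy_mem : ∀ t, 1 ≤ t → t ≤ T → y t ∈ Set.Icc (0 : ℝ) 1)
    (hy_mono : ∀ s t, 1 ≤ s → s ≤ t → t ≤ T → y s ≤ y t)
    (hFy : ∀ t, 1 ≤ t → t ≤ T → F (y t) = τ t)
    (hGy : ∀ t, 1 ≤ t → t ≤ T → G (y t) = τ t) :
    levyDist F G ≤ ε := by
  obtain ⟨hFmono, _, hFrange, _, _⟩ := hF
  obtain ⟨hGmono, _, hGrange, _, _⟩ := hG
  have hgap : ∀ t, t ≤ T → τ (t + 1) - τ t ≤ ε := by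
    intro t ht
    have hmem : t + 1 ∈ Finset.Icc 1 (T + 1) := Finset.mem_Icc.mpr ⟨by omega, by omega⟩
    have := Finset.le_sup' (f := fun t => τ t - τ (t - 1)) hmem
    rw [hε]; simpa only [Nat.add_sub_cancel] using this
  have hεpos : 0 < ε := by
    have h1 := hgap 0 (Nat.zero_le T)
    have h2 := hτmono 0 (Nat.zero_le T)
    rw [hτ0] at h1 h2
    linarith
  have hGF := key_shared_quantiles T τ hτ0 hτlast ε hgap F G hFmono
    (fun z => (hFrange z).1) hGmono (fun z => (hGrange z).2) y hFy hGy
  have hFG := key_shared_quantiles T τ hτ0 hτlast ε hgap G F hGmono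
    (fun z => (hGrange z).1) hFmono (fun z => (hFrange z).2) y hGy hFy
  apply csInf_le
  · exact ⟨0, fun x hx => le_of_lt hx.1⟩
  · refine ⟨hεpos, fun z => ⟨?_, ?_⟩⟩
    · have h1 : F (z - ε) ≤ F z := hFmono (by linarith)
      have := hFG z
      linarith
    · have h1 : F z ≤ F (z + ε) := hFmono (by linarith)
      have := hGF z
      linarith
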